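/- arXiv:1502.07097 — 2 statements merged into one kernel-verified Lean document; each statement's English description precedes it below -/
import Mathlib

section
/- There exist absolute constants c0, c1, c2 and, for every 2 < q ≤ 4, constants c3, c4 depending only on q, for which the following holds. Let f ∈ Lq(μ) be nonzero, let 1 ≤ m ≤ N with N ≥ c0·m, and set I_f = {1 ≤ i ≤ N : |f(X_i)| ≤ (N/m)^{1/q}‖f‖_{Lq}}. Then with probability at least 1 − 2exp(−c1 m): (1) |I_f| ≥ N − c2·m, and (2) for every J ⊂ {1,…,N} with |J| ≤ 4m, ‖f‖_{L2}² − c3‖f‖_{Lq}²(m/N)^{1−2/q} ≤ N^{−1}∑_{i∈I_f∖J} f²(X_i) ≤ ‖f‖_{L2}² + c4‖f‖_{Lq}²(m/N)^{1−2/q}. -/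
set_option maxHeartbeats 1000000

open MeasureTheory ProbabilityTheory
open scoped ENNReal

variable {Ω : Type} [MeasurableSpace Ω]

/-- The `L2(μ)` norm of a function. -/
noncomputable def l2norm (μ : Measure Ω) (f : Ω → ℝ) : ℝ :=
  Real.sqrt (∫ x, (f x) ^ 2 ∂μ)

/-- The `Lq(μ)` norm of a function, for a real exponent `q`. -/
noncomputable def lqnorm (μ : Measure Ω) (q : ℝ) (f : Ω → ℝ) : ℝ :=
  (∫ x, |f x| ^ q ∂μ) ^ (1 / q)

/-- The `L2(μ)` diameter of a class of functions. -/
noncomputable def diam2 (μ : Measure Ω) (V : Set (Ω → ℝ)) : ℝ :=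
  sSup {d | ∃ v₁ ∈ V, ∃ v₂ ∈ V, d = l2norm μ (v₁ - v₂)}

/-- `U`: the set of midpoints of pairs of functions from `F` (contains `F`). -/
def midSet (F : Set (Ω → ℝ)) : Set (Ω → ℝ) :=
  {u | ∃ f₁ ∈ F, ∃ f₂ ∈ F, u = fun x => (f₁ x + f₂ x) / 2}

/-- The star-shaped hull of `K` around `0`. -/
def starSh (K : Set (Ω → ℝ)) : Set (Ω → ℝ) :=
  {g | ∃ l : ℝ, 0 ≤ l ∧ l ≤ 1 ∧ ∃ k ∈ K, g = fun x => l * k x}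

/-- The difference set `A - B`. -/
def setSub (A B : Set (Ω → ℝ)) : Set (Ω → ℝ) :=
  {g | ∃ a ∈ A, ∃ b ∈ B, g = a - b}

/-- The ball of radius `r` around `0` in `L2(μ)`. -/
def ball2 (μ : Measure Ω) (r : ℝ) : Set (Ω → ℝ) := {h | l2norm μ h ≤ r}

/-- The (random) index set `I_f = {i ≤ N : |f(X_i)| ≤ thr}` of coordinates on which `f`
is not truncated. -/
noncomputable def goodIdx {N : ℕ} (f : Ω → ℝ) (thr : ℝ) (x : Fin N → Ω) : Finset (Fin N) :=
  letI : DecidablePred (fun i : Fin N => |f (x i)| ≤ thr) := fun _ => Classical.dec _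
  Finset.univ.filter (fun i => |f (x i)| ≤ thr)

lemma numaux {t : ℝ} (h1 : 0 < t) (h2 : t < 1/2) : (1 - 2*t) + 3*t^2 ≤ 1 := by
  nlinarith

lemma exp_le_one_add_add_sq {x : ℝ} (hx : |x| ≤ 1) : Real.exp x ≤ 1 + x + x ^ 2 := by
  have h := Real.exp_bound hx (n := 3) (by norm_num)
  have hs : ∑ i ∈ Finset.range 3, x ^ i / i.factorial = 1 + x + x ^ 2 / 2 := by
    simp [Finset.sum_range_succ, Nat.factorial]
  rw [hs] at h
  have h2 : Real.exp x - (1 + x + x ^ 2 / 2) ≤ |x| ^ 3 * ((3 + 1 : ℕ) / ((3:ℕ).factorial * 3)) :=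
    (le_abs_self _).trans h
  have h3 : |x| ^ 3 ≤ x ^ 2 := by
    calc |x| ^ 3 = |x| * |x| ^ 2 := by ring
    _ ≤ 1 * |x| ^ 2 := by nlinarith [abs_nonneg x, sq_nonneg (|x|)]
    _ = x ^ 2 := by rw [one_mul, sq_abs]
  have : ((3 + 1 : ℕ) : ℝ) / ((3:ℕ).factorial * 3) = 2/9 := by norm_num [Nat.factorial]
  rw [this] at h2
  nlinarith [sq_nonneg x]

lemma tail_bound {Ω : Type} [MeasurableSpace Ω] (μ : Measure Ω) [IsProbabilityMeasure μ]
    (Y : Ω → ℝ) (hY : Measurable Y) {l : ℝ} (hl : 0 < l) (hb : ∀ ω, |l * Y ω| ≤ 1)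
    (h0 : ∫ ω, Y ω ∂μ = 0) (N : ℕ) (t : ℝ) :
    ((Measure.pi fun _ : Fin N => μ) {x | t ≤ ∑ i, Y (x i)}) ≤
      ENNReal.ofReal (Real.exp ((N : ℝ) * (l ^ 2 * ∫ ω, (Y ω) ^ 2 ∂μ) - l * t)) := by
  classical
  set V : ℝ := ∫ ω, (Y ω) ^ 2 ∂μ with hV
  have hV0 : 0 ≤ V := integral_nonneg fun ω => sq_nonneg _
  have hYb : ∀ ω, |Y ω| ≤ 1 / l := fun ω => by
    have := hb ω; rw [abs_mul, abs_of_pos hl] at this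
    rw [le_div_iff₀ hl]; linarith [this]
  have intY : Integrable Y μ := by
    refine (integrable_const (1/l)).mono' hY.aestronglyMeasurable ?_
    exact ae_of_all _ fun ω => by simpa [Real.norm_eq_abs] using hYb ω
  have intY2 : Integrable (fun ω => (Y ω) ^ 2) μ := by
    refine (integrable_const ((1/l)^2)).mono' (hY.pow_const 2).aestronglyMeasurable ?_
    refine ae_of_all _ fun ω => ?_
    have := hYb ω
    have h1 : |Y ω| ^ 2 ≤ (1/l) ^ 2 := by
      apply pow_le_pow_left₀ (abs_nonneg _) this
    simpa [Real.norm_eq_abs, abs_pow, sq_abs] using h1.trans_eq rfl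
  have intExp : Integrable (fun ω => Real.exp (l * Y ω)) μ := by
    refine (integrable_const (Real.exp 1)).mono'
      ((hY.const_mul l).exp).aestronglyMeasurable ?_
    refine ae_of_all _ fun ω => ?_
    rw [Real.norm_eq_abs, abs_of_pos (Real.exp_pos _)]
    exact Real.exp_le_exp.2 ((le_abs_self _).trans (hb ω))
  -- mgf bound for a single variable
  have mgf1 : ∫ ω, Real.exp (l * Y ω) ∂μ ≤ Real.exp (l ^ 2 * V) := by
    have step1 : ∫ ω, Real.exp (l * Y ω) ∂μ ≤ ∫ ω, (1 + l * Y ω + (l * Y ω) ^ 2) ∂μ := by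
      have i1 : Integrable (fun ω => 1 + l * Y ω) μ := by
        exact (integrable_const 1).add (intY.const_mul l)
      have i2 : Integrable (fun ω => (l * Y ω) ^ 2) μ := by
        simpa [mul_pow] using intY2.const_mul (l ^ 2)
      exact integral_mono intExp (i1.add i2) (fun ω => exp_le_one_add_add_sq (hb ω))
    have i1 : Integrable (fun ω => 1 + l * Y ω) μ := by
      exact (integrable_const 1).add (intY.const_mul l)
    have i2 : Integrable (fun ω => (l * Y ω) ^ 2) μ := by
      simpa [mul_pow] using intY2.const_mul (l ^ 2)
    have step2 : ∫ ω, (1 + l * Y ω + (l * Y ω) ^ 2) ∂μ = 1 + l ^ 2 * V := by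
      rw [integral_add i1 i2, integral_add (integrable_const 1) (intY.const_mul l)]
      simp only [integral_const, measure_univ, probReal_univ, ENNReal.toReal_one, smul_eq_mul, one_mul]
      rw [integral_const_mul, h0]
      have : ∫ ω, (l * Y ω) ^ 2 ∂μ = l ^ 2 * V := by
        simp_rw [mul_pow]; rw [integral_const_mul]
      rw [this]; ring
    calc ∫ ω, Real.exp (l * Y ω) ∂μ ≤ 1 + l ^ 2 * V := step1.trans_eq step2
      _ ≤ Real.exp (l ^ 2 * V) := by linarith [Real.add_one_le_exp (l ^ 2 * V)]
  letI : MeasureSpace Ω := ⟨μ⟩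
  have hvolpi : (volume : Measure (Fin N → Ω)) = Measure.pi fun _ : Fin N => μ := rfl
  set π : Measure (Fin N → Ω) := Measure.pi fun _ : Fin N => μ with hπ
  haveI : IsProbabilityMeasure π := by
    rw [← hvolpi]; rw [hvolpi]; infer_instance
  set S : (Fin N → Ω) → ℝ := fun x => ∑ i, Y (x i) with hS
  have hSmeas : Measurable S := by
    apply Finset.measurable_sum
    exact fun i _ => hY.comp (measurable_pi_apply i)
  have hSb : ∀ x, |l * S x| ≤ N := by
    intro x
    rw [hS, Finset.mul_sum]
    calc |∑ i : Fin N, l * Y (x i)| ≤ ∑ i : Fin N, |l * Y (x i)| :=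
          Finset.abs_sum_le_sum_abs _ _
      _ ≤ ∑ _i : Fin N, (1 : ℝ) := Finset.sum_le_sum fun i _ => hb (x i)
      _ = N := by simp
  have h_int : Integrable (fun x => Real.exp (l * S x)) π := by
    refine (integrable_const (Real.exp N)).mono'
      ((hSmeas.const_mul l).exp).aestronglyMeasurable ?_
    refine ae_of_all _ fun x => ?_
    rw [Real.norm_eq_abs, abs_of_pos (Real.exp_pos _)]
    exact Real.exp_le_exp.2 ((le_abs_self _).trans (hSb x))
  have chern := measure_ge_le_exp_mul_mgf (μ := π) (X := S) (ε := t) hl.le h_int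
  have hprod : mgf S π l = (∫ ω, Real.exp (l * Y ω) ∂μ) ^ N := by
    rw [mgf]
    have : ∀ x : Fin N → Ω, Real.exp (l * S x) = ∏ i : Fin N, Real.exp (l * Y (x i)) := by
      intro x; rw [hS, Finset.mul_sum, Real.exp_sum]
    simp_rw [this]
    rw [← hvolpi]
    simpa [hvolpi] using MeasureTheory.integral_fintype_prod_eq_pow (ι := Fin N)
      (fun ω => Real.exp (l * Y ω)) (E := Ω) (μ := μ)
  have hfin : (π {x | t ≤ S x}).toReal ≤ Real.exp ((N : ℝ) * (l ^ 2 * V) - l * t) := by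
    calc (π {x | t ≤ S x}).toReal ≤ Real.exp (-l * t) * mgf S π l := chern
      _ ≤ Real.exp (-l * t) * Real.exp (l ^ 2 * V) ^ N := by
          rw [hprod]
          refine mul_le_mul_of_nonneg_left ?_ (Real.exp_pos _).le
          exact pow_le_pow_left₀ (integral_nonneg fun ω => (Real.exp_pos _).le) mgf1 N
      _ = Real.exp ((N : ℝ) * (l ^ 2 * V) - l * t) := by
          rw [← Real.exp_nat_mul, ← Real.exp_add]; ring_nf
  calc π {x | t ≤ ∑ i, Y (x i)} = ENNReal.ofReal ((π {x | t ≤ S x}).toReal) := by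
        rw [ENNReal.ofReal_toReal (measure_ne_top _ _)]
    _ ≤ ENNReal.ofReal (Real.exp ((N : ℝ) * (l ^ 2 * V) - l * t)) :=
        ENNReal.ofReal_le_ofReal hfin

lemma int_of_bdd {Ω : Type} [MeasurableSpace Ω] (μ : Measure Ω) [IsFiniteMeasure μ]
    {g : Ω → ℝ} (hg : Measurable g) (C : ℝ) (h : ∀ ω, |g ω| ≤ C) : Integrable g μ :=
  (integrable_const C).mono' hg.aestronglyMeasurable
    (ae_of_all _ fun ω => by simpa [Real.norm_eq_abs] using h ω)


/-- Theorem 3.2, estimate for a single function. There are absolute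
constants `c₀, c₁, c₂`, and for `2 < q ≤ 4` constants `c₃, c₄ = c(q)`, such that if
`N ≥ c₀·m` then with probability at least `1 - 2exp(-c₁m)`: `|I_f| ≥ N - c₂m`, and for
every `J` with `|J| ≤ 4m`, `N⁻¹∑_{i ∈ I_f \ J} f²(X_i)` is within
`c·‖f‖²_{Lq}(m/N)^{1-2/q}` of `‖f‖²_{L2}`. -/
theorem statement5 :
    ∃ c₀ c₁ c₂ : ℝ, 0 < c₀ ∧ 0 < c₁ ∧ 0 < c₂ ∧
    ∀ q : ℝ, 2 < q → q ≤ 4 →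
    ∃ c₃ c₄ : ℝ, 0 < c₃ ∧ 0 < c₄ ∧
    ∀ (Ω : Type) [MeasurableSpace Ω] (μ : Measure Ω) [IsProbabilityMeasure μ]
      (f : Ω → ℝ), Measurable f → MemLp f (ENNReal.ofReal q) μ →
      0 < ∫ a, |f a| ^ q ∂μ →
    ∀ m N : ℕ, 1 ≤ m → m ≤ N → c₀ * m ≤ (N : ℝ) →
    ENNReal.ofReal (1 - 2 * Real.exp (-c₁ * m)) ≤
      (Measure.pi fun _ : Fin N => μ)
        {x | ((N : ℝ) - c₂ * m ≤
                ((goodIdx f (((N : ℝ) / m) ^ (1 / q) * lqnorm μ q f) x).card : ℝ)) ∧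
          ∀ J : Finset (Fin N), J.card ≤ 4 * m →
            (l2norm μ f ^ 2 - c₃ * lqnorm μ q f ^ 2 * ((m : ℝ) / N) ^ (1 - 2 / q) ≤
              (N : ℝ)⁻¹ * ∑ i ∈ (goodIdx f (((N : ℝ) / m) ^ (1 / q) * lqnorm μ q f) x) \ J,
                f (x i) ^ 2) ∧
            ((N : ℝ)⁻¹ * ∑ i ∈ (goodIdx f (((N : ℝ) / m) ^ (1 / q) * lqnorm μ q f) x) \ J,
                f (x i) ^ 2 ≤
              l2norm μ f ^ 2 + c₄ * lqnorm μ q f ^ 2 * ((m : ℝ) / N) ^ (1 - 2 / q))} := by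
  refine ⟨1, 1/2, 3, one_pos, by norm_num, by norm_num, ?_⟩
  intro q hq2 hq4
  refine ⟨7, 2, by norm_num, by norm_num, ?_⟩
  intro Ω _ μ _ f hf hfq hApos m N hm1 hmN _hc0
  have hq0 : (0:ℝ) < q := by linarith
  have hm0 : (0:ℝ) < m := by exact_mod_cast hm1
  have hN0 : (0:ℝ) < N := lt_of_lt_of_le hm0 (by exact_mod_cast hmN)
  set A : ℝ := ∫ a, |f a| ^ q ∂μ with hA_def
  set nq : ℝ := lqnorm μ q f with hnq_def
  have hnq : 0 < nq := Real.rpow_pos_of_pos hApos _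
  have hnqq : nq ^ q = A := by
    rw [hnq_def, lqnorm, ← Real.rpow_mul hApos.le, one_div,
      inv_mul_cancel₀ (ne_of_gt hq0), Real.rpow_one]
  set r : ℝ := (m : ℝ) / N with hr_def
  have hr0 : 0 < r := div_pos hm0 hN0
  have hr1 : r ≤ 1 := by
    rw [div_le_one hN0]; exact_mod_cast hmN
  have hNm : (N : ℝ) / m = r⁻¹ := by rw [hr_def]; field_simp
  set thr : ℝ := ((N : ℝ) / m) ^ (1 / q) * nq with hthr_def
  have hthr0 : 0 < thr := by
    apply mul_pos _ hnq
    exact Real.rpow_pos_of_pos (div_pos hN0 hm0) _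
  set b : ℝ := thr ^ 2 with hb_def
  have hb0 : 0 < b := by positivity
  set δ : ℝ := nq ^ 2 * r ^ (1 - 2/q) with hδ_def
  have hδ0 : 0 < δ := by
    apply mul_pos (by positivity) (Real.rpow_pos_of_pos hr0 _)
  -- key rpow identities
  have hthrq : thr ^ q = r⁻¹ * A := by
    rw [hthr_def, Real.mul_rpow (by positivity) hnq.le, hNm, hnqq,
      ← Real.rpow_mul (by positivity), one_div, inv_mul_cancel₀ (ne_of_gt hq0),
      Real.rpow_one]
  have hb_eq : b = nq ^ 2 * r ^ (-(2/q)) := by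
    rw [hb_def, hthr_def, mul_pow, hNm, ← Real.rpow_natCast (r⁻¹ ^ (1/q)) 2,
      ← Real.rpow_mul (by positivity), Real.inv_rpow hr0.le, ← Real.rpow_neg hr0.le]
    have : -(1/q * (2:ℕ)) = -(2/q) := by push_cast; ring
    rw [this]; ring
  have hδb : δ = r * b := by
    rw [hδ_def, hb_eq, show (1 - 2/q) = 1 + (-(2/q)) by ring, Real.rpow_add hr0,
      Real.rpow_one]
    ring
  have hδ2 : thr ^ (2 - q) * A = δ := by
    rw [hthr_def, Real.mul_rpow (by positivity) hnq.le, hNm, hδ_def]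
    rw [← Real.rpow_mul (by positivity), Real.inv_rpow hr0.le, ← Real.rpow_neg hr0.le]
    have h1 : -(1/q * (2 - q)) = 1 - 2/q := by field_simp; ring
    rw [h1, ← hnqq, ← Real.rpow_natCast nq 2]
    rw [mul_assoc, mul_comm (nq ^ (2-q)), ← Real.rpow_add hnq]
    have h2 : q + (2 - q) = ((2:ℕ):ℝ) := by push_cast; ring
    rw [h2]; ring
  have hW2 : thr ^ (4 - q) * A = b ^ 2 * r := by
    rw [show (4:ℝ) - q = (4:ℝ) + (-q) by ring, Real.rpow_add hthr0,
      Real.rpow_neg hthr0.le, hthrq, show (4:ℝ) = ((4:ℕ):ℝ) by norm_num,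
      Real.rpow_natCast, hb_def]
    have hA0 : A ≠ 0 := ne_of_gt hApos
    have hr0' : r ≠ 0 := ne_of_gt hr0
    field_simp
  -- truncation functions
  set g : Ω → ℝ := fun ω => if |f ω| ≤ thr then f ω ^ 2 else 0 with hg_def
  set h : Ω → ℝ := fun ω => if |f ω| ≤ thr then 0 else 1 with hh_def
  have hPm : MeasurableSet {ω | |f ω| ≤ thr} := measurableSet_le hf.abs measurable_const
  have hgm : Measurable g := Measurable.ite hPm (hf.pow_const 2) measurable_const
  have hhm : Measurable h := Measurable.ite hPm measurable_const measurable_const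
  have hg0 : ∀ ω, 0 ≤ g ω := fun ω => by
    rw [hg_def]; dsimp only; split <;> [exact sq_nonneg _; exact le_rfl]
  have hgb : ∀ ω, g ω ≤ b := fun ω => by
    rw [hg_def, hb_def]; dsimp only; split
    · next hc => calc f ω ^ 2 = |f ω| ^ 2 := (sq_abs _).symm
        _ ≤ thr ^ 2 := by apply pow_le_pow_left₀ (abs_nonneg _) hc
    · positivity
  have hh01 : ∀ ω, 0 ≤ h ω ∧ h ω ≤ 1 := fun ω => by
    rw [hh_def]; dsimp only; split <;> norm_num
  have int_g : Integrable g μ := int_of_bdd μ hgm b fun ω =>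
    abs_le.2 ⟨by linarith [hg0 ω, hb0], hgb ω⟩
  have int_g2 : Integrable (fun ω => g ω ^ 2) μ := int_of_bdd μ (hgm.pow_const 2) (b ^ 2)
    fun ω => by
      rw [abs_pow, sq_abs]
      exact pow_le_pow_left₀ (hg0 ω) (hgb ω) 2
  have int_h : Integrable h μ := int_of_bdd μ hhm 1 fun ω =>
    abs_le.2 ⟨by linarith [(hh01 ω).1], (hh01 ω).2⟩
  have int_fq : Integrable (fun ω => |f ω| ^ q) μ := by
    have := hfq.integrable_norm_rpow (by simp [ENNReal.ofReal_eq_zero]; linarith)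
      ENNReal.ofReal_ne_top
    simpa [ENNReal.toReal_ofReal hq0.le, Real.norm_eq_abs] using this
  have int_f2 : Integrable (fun ω => f ω ^ 2) μ := by
    have h2q : (2 : ℝ≥0∞) ≤ ENNReal.ofReal q := by
      rw [show (2 : ℝ≥0∞) = ENNReal.ofReal 2 by norm_num]
      exact ENNReal.ofReal_le_ofReal (by linarith)
    exact (memLp_two_iff_integrable_sq hf.aestronglyMeasurable).1
      (hfq.mono_exponent h2q)
  set G : ℝ := ∫ ω, g ω ∂μ with hG_def
  set p : ℝ := ∫ ω, h ω ∂μ with hp_def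
  have hG0 : 0 ≤ G := integral_nonneg hg0
  have hGb : G ≤ b := by
    calc G ≤ ∫ _ω, b ∂μ := integral_mono int_g (integrable_const b) hgb
      _ = b := by simp
  have hGf2 : G ≤ ∫ ω, f ω ^ 2 ∂μ := by
    refine integral_mono int_g int_f2 fun ω => ?_
    rw [hg_def]; dsimp only; split
    · exact le_rfl
    · exact sq_nonneg _
  have hp0 : 0 ≤ p := integral_nonneg fun ω => (hh01 ω).1
  have hp1 : p ≤ 1 := by
    calc p ≤ ∫ _ω, (1:ℝ) ∂μ :=
          integral_mono int_h (integrable_const 1) fun ω => (hh01 ω).2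
      _ = 1 := by simp
  -- p ≤ r
  have hpr : p ≤ r := by
    have ptw : ∀ ω, thr ^ q * h ω ≤ |f ω| ^ q := by
      intro ω
      rw [hh_def]; dsimp only; split
      · next => rw [mul_zero]; positivity
      · next hc =>
        rw [mul_one]
        exact Real.rpow_le_rpow hthr0.le (le_of_not_ge hc) hq0.le
    have : thr ^ q * p ≤ A := by
      rw [hp_def, ← integral_const_mul, hA_def]
      exact integral_mono (int_h.const_mul _) int_fq ptw
    rw [hthrq] at this
    calc p = (r⁻¹ * A)⁻¹ * (r⁻¹ * A * p) := by field_simp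
      _ ≤ (r⁻¹ * A)⁻¹ * A := by
          refine mul_le_mul_of_nonneg_left ?_ (by positivity)
          linarith [this]
      _ = r := by field_simp
  -- bias bound
  have hbias : ∫ ω, f ω ^ 2 ∂μ - G ≤ δ := by
    have ptw : ∀ ω, f ω ^ 2 - g ω ≤ thr ^ (2 - q) * |f ω| ^ q := by
      intro ω
      rw [hg_def]; dsimp only; split
      · next => simp only [sub_self]; positivity
      · next hc =>
        have hfw : thr < |f ω| := lt_of_not_ge hc
        have hfw0 : 0 < |f ω| := hthr0.trans hfw
        rw [sub_zero]
        calc f ω ^ 2 = |f ω| ^ (2:ℝ) := by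
              rw [show (2:ℝ) = ((2:ℕ):ℝ) by norm_num, Real.rpow_natCast, sq_abs]
          _ = |f ω| ^ (2 - q) * |f ω| ^ q := by
              rw [← Real.rpow_add hfw0]; ring_nf
          _ ≤ thr ^ (2 - q) * |f ω| ^ q := by
              refine mul_le_mul_of_nonneg_right ?_ (by positivity)
              exact Real.rpow_le_rpow_of_nonpos hthr0 hfw.le (by linarith)
    have : ∫ ω, (f ω ^ 2 - g ω) ∂μ ≤ thr ^ (2 - q) * A := by
      rw [hA_def, ← integral_const_mul]
      exact integral_mono (int_f2.sub int_g) (int_fq.const_mul _) ptw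
    rw [integral_sub int_f2 int_g, ← hG_def, hδ2] at this
    exact this
  -- second moment of g
  have hg2W : ∫ ω, g ω ^ 2 ∂μ ≤ b ^ 2 * r := by
    have ptw : ∀ ω, g ω ^ 2 ≤ thr ^ (4 - q) * |f ω| ^ q := by
      intro ω
      rw [hg_def]; dsimp only; split
      · next hc =>
        calc (f ω ^ 2) ^ 2 = |f ω| ^ (4:ℝ) := by
              rw [show (4:ℝ) = ((4:ℕ):ℝ) by norm_num, Real.rpow_natCast]
              rw [show |f ω| ^ (4:ℕ) = (|f ω| ^ 2) ^ 2 by ring, sq_abs]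
          _ = |f ω| ^ (4 - q) * |f ω| ^ q := by
              rw [← Real.rpow_add' (abs_nonneg _) (by norm_num)]
              norm_num
          _ ≤ thr ^ (4 - q) * |f ω| ^ q := by
              refine mul_le_mul_of_nonneg_right ?_ (by positivity)
              exact Real.rpow_le_rpow (abs_nonneg _) hc (by linarith)
      · next => rw [show ((0:ℝ) ^ 2 = 0) from by norm_num]; positivity
    calc ∫ ω, g ω ^ 2 ∂μ ≤ ∫ ω, thr ^ (4 - q) * |f ω| ^ q ∂μ :=
          integral_mono int_g2 (int_fq.const_mul _) ptw
      _ = thr ^ (4 - q) * A := by rw [integral_const_mul, hA_def]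
      _ = b ^ 2 * r := hW2
  -- centered second moments
  have hvar_g : ∫ ω, (g ω - G) ^ 2 ∂μ ≤ b ^ 2 * r := by
    have expand : ∀ ω, (g ω - G) ^ 2 = g ω ^ 2 - 2 * G * g ω + G ^ 2 := fun ω => by ring
    have : ∫ ω, (g ω - G) ^ 2 ∂μ = ∫ ω, g ω ^ 2 ∂μ - G ^ 2 := by
      simp_rw [expand]
      have i1 : Integrable (fun ω => g ω ^ 2 - 2 * G * g ω) μ := by
        exact int_g2.sub (int_g.const_mul _)
      rw [integral_add i1 (integrable_const _),
        integral_sub int_g2 (int_g.const_mul _), integral_const_mul, ← hG_def,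
        integral_const]
      simp only [measure_univ, probReal_univ, ENNReal.toReal_one, smul_eq_mul, one_mul]
      ring
    rw [this]
    linarith only [hg2W, sq_nonneg G]
  have hvar_h : ∫ ω, (h ω - p) ^ 2 ∂μ ≤ p := by
    have expand : ∀ ω, (h ω - p) ^ 2 = h ω ^ 2 - 2 * p * h ω + p ^ 2 := fun ω => by ring
    have hsq : ∀ ω, h ω ^ 2 = h ω := fun ω => by
      rw [hh_def]; dsimp only; split <;> norm_num
    have int_h2 : Integrable (fun ω => h ω ^ 2) μ := by simp_rw [hsq]; exact int_h
    have : ∫ ω, (h ω - p) ^ 2 ∂μ = p - p ^ 2 := by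
      simp_rw [expand]
      have i1 : Integrable (fun ω => h ω ^ 2 - 2 * p * h ω) μ := by
        exact int_h2.sub (int_h.const_mul _)
      rw [integral_add i1 (integrable_const _),
        integral_sub int_h2 (int_h.const_mul _), integral_const_mul, ← hp_def,
        integral_const]
      have : ∫ ω, h ω ^ 2 ∂μ = p := by simp_rw [hsq]; try exact hp_def.symm
      rw [this]
      simp only [measure_univ, probReal_univ, ENNReal.toReal_one, smul_eq_mul, one_mul]
      ring
    rw [this]
    linarith only [sq_nonneg p]
  -- the three bad events
  set π : Measure (Fin N → Ω) := Measure.pi fun _ : Fin N => μ with hπ_def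
  set B1 : Set (Fin N → Ω) := {x | 2 * (m:ℝ) ≤ ∑ i, (h (x i) - p)} with hB1_def
  set B2 : Set (Fin N → Ω) := {x | 2 * (N:ℝ) * δ ≤ ∑ i, (g (x i) - G)} with hB2_def
  set B3 : Set (Fin N → Ω) := {x | 2 * (N:ℝ) * δ ≤ ∑ i, (G - g (x i))} with hB3_def
  have hNr : (N:ℝ) * r = m := by rw [hr_def]; field_simp
  have hB1 : π B1 ≤ ENNReal.ofReal (Real.exp (-(m:ℝ))) := by
    have h0 : ∫ ω, (h ω - p) ∂μ = 0 := by
      rw [integral_sub int_h (integrable_const p), ← hp_def, integral_const]; simp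
    have hbd : ∀ ω, |(1:ℝ) * (h ω - p)| ≤ 1 := fun ω => by
      rw [one_mul, abs_le]
      constructor <;> [linarith [(hh01 ω).1, hp1]; linarith [(hh01 ω).2, hp0]]
    have := tail_bound μ (fun ω => h ω - p) (hhm.sub measurable_const)
      one_pos hbd h0 N (2 * m)
    refine this.trans (ENNReal.ofReal_le_ofReal (Real.exp_le_exp.2 ?_))
    have hNp : (N:ℝ) * p ≤ m := by
      calc (N:ℝ) * p ≤ N * r := by
            exact mul_le_mul_of_nonneg_left hpr hN0.le
        _ = m := hNr
    have hVN : (N:ℝ) * ∫ ω, (h ω - p) ^ 2 ∂μ ≤ (N:ℝ) * p :=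
      mul_le_mul_of_nonneg_left hvar_h hN0.le
    linarith only [hVN, hNp]
  have hB2 : π B2 ≤ ENNReal.ofReal (Real.exp (-(m:ℝ))) := by
    have h0 : ∫ ω, (g ω - G) ∂μ = 0 := by
      rw [integral_sub int_g (integrable_const G), ← hG_def, integral_const]; simp
    have hbd : ∀ ω, |b⁻¹ * (g ω - G)| ≤ 1 := fun ω => by
      rw [abs_mul, abs_of_pos (inv_pos.2 hb0)]
      rw [inv_mul_le_iff₀ hb0, mul_one, abs_le]
      constructor <;> [linarith [hg0 ω, hGb]; linarith [hgb ω, hG0]]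
    have := tail_bound μ (fun ω => g ω - G) (hgm.sub measurable_const)
      (inv_pos.2 hb0) hbd h0 N (2 * N * δ)
    refine this.trans (ENNReal.ofReal_le_ofReal (Real.exp_le_exp.2 ?_))
    have key : (N:ℝ) * ((b⁻¹) ^ 2 * ∫ ω, (g ω - G) ^ 2 ∂μ) ≤ m := by
      calc (N:ℝ) * ((b⁻¹) ^ 2 * ∫ ω, (g ω - G) ^ 2 ∂μ)
          ≤ (N:ℝ) * ((b⁻¹) ^ 2 * (b ^ 2 * r)) := by
            refine mul_le_mul_of_nonneg_left
              (mul_le_mul_of_nonneg_left hvar_g (by positivity)) hN0.le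
        _ = (N:ℝ) * r := by field_simp
        _ = m := hNr
    have hlt : b⁻¹ * (2 * N * δ) = 2 * m := by
      calc b⁻¹ * (2 * (N:ℝ) * δ) = 2 * ((N:ℝ) * r) * (b⁻¹ * b) := by rw [hδb]; ring
        _ = 2 * m := by rw [inv_mul_cancel₀ (ne_of_gt hb0), hNr, mul_one]
    rw [hlt]
    linarith only [key]
  have hB3 : π B3 ≤ ENNReal.ofReal (Real.exp (-(m:ℝ))) := by
    have h0 : ∫ ω, (G - g ω) ∂μ = 0 := by
      rw [integral_sub (integrable_const G) int_g, ← hG_def, integral_const]; simp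
    have hbd : ∀ ω, |b⁻¹ * (G - g ω)| ≤ 1 := fun ω => by
      rw [abs_mul, abs_of_pos (inv_pos.2 hb0)]
      rw [inv_mul_le_iff₀ hb0, mul_one, abs_le]
      constructor <;> [linarith [hgb ω, hG0]; linarith [hg0 ω, hGb]]
    have := tail_bound μ (fun ω => G - g ω) (measurable_const.sub hgm)
      (inv_pos.2 hb0) hbd h0 N (2 * N * δ)
    refine this.trans (ENNReal.ofReal_le_ofReal (Real.exp_le_exp.2 ?_))
    have hvar_g' : ∫ ω, (G - g ω) ^ 2 ∂μ ≤ b ^ 2 * r := by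
      have : ∀ ω, (G - g ω) ^ 2 = (g ω - G) ^ 2 := fun ω => by ring
      simp_rw [this]; exact hvar_g
    have key : (N:ℝ) * ((b⁻¹) ^ 2 * ∫ ω, (G - g ω) ^ 2 ∂μ) ≤ m := by
      calc (N:ℝ) * ((b⁻¹) ^ 2 * ∫ ω, (G - g ω) ^ 2 ∂μ)
          ≤ (N:ℝ) * ((b⁻¹) ^ 2 * (b ^ 2 * r)) := by
            refine mul_le_mul_of_nonneg_left
              (mul_le_mul_of_nonneg_left hvar_g' (by positivity)) hN0.le
        _ = (N:ℝ) * r := by field_simp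
        _ = m := hNr
    have hlt : b⁻¹ * (2 * N * δ) = 2 * m := by
      calc b⁻¹ * (2 * (N:ℝ) * δ) = 2 * ((N:ℝ) * r) * (b⁻¹ * b) := by rw [hδb]; ring
        _ = 2 * m := by rw [inv_mul_cancel₀ (ne_of_gt hb0), hNr, mul_one]
    rw [hlt]
    linarith only [key]
  have hl2 : l2norm μ f ^ 2 = ∫ ω, f ω ^ 2 ∂μ :=
    Real.sq_sqrt (integral_nonneg fun ω => sq_nonneg _)
  set F2 : ℝ := ∫ ω, f ω ^ 2 ∂μ with hF2_def
  -- deterministic consequences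
  have hdet : ∀ x : Fin N → Ω,
      (∑ i, (h (x i) - p) < 2 * (m:ℝ)) →
      (∑ i, (g (x i) - G) < 2 * (N:ℝ) * δ) →
      (∑ i, (G - g (x i)) < 2 * (N:ℝ) * δ) →
      ((N : ℝ) - 3 * m ≤ ((goodIdx f thr x).card : ℝ)) ∧
      ∀ J : Finset (Fin N), J.card ≤ 4 * m →
        (l2norm μ f ^ 2 - 7 * nq ^ 2 * r ^ (1 - 2 / q) ≤
          (N : ℝ)⁻¹ * ∑ i ∈ goodIdx f thr x \ J, f (x i) ^ 2) ∧
        ((N : ℝ)⁻¹ * ∑ i ∈ goodIdx f thr x \ J, f (x i) ^ 2 ≤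
          l2norm μ f ^ 2 + 2 * nq ^ 2 * r ^ (1 - 2 / q)) := by
    intro x hx1 hx2 hx3
    classical
    have hsum_sub : ∀ (u : Ω → ℝ) (c : ℝ), ∑ i : Fin N, (u (x i) - c) =
        (∑ i, u (x i)) - N * c := by
      intro u c
      rw [Finset.sum_sub_distrib, Finset.sum_const, Finset.card_univ,
        Fintype.card_fin, nsmul_eq_mul]
    have hsum_sub' : ∀ (u : Ω → ℝ) (c : ℝ), ∑ i : Fin N, (c - u (x i)) =
        N * c - (∑ i, u (x i)) := by
      intro u c
      rw [Finset.sum_sub_distrib, Finset.sum_const, Finset.card_univ,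
        Fintype.card_fin, nsmul_eq_mul]
    rw [hsum_sub] at hx1 hx2
    rw [hsum_sub'] at hx3
    have hNp : (N:ℝ) * p ≤ m := by
      calc (N:ℝ) * p ≤ N * r := mul_le_mul_of_nonneg_left hpr hN0.le
        _ = m := hNr
    have hsum_h : ∑ i, h (x i) < 3 * m := by linarith only [hx1, hNp]
    have hcard_sum : ((goodIdx f thr x).card : ℝ) =
        ∑ i, (if |f (x i)| ≤ thr then (1:ℝ) else 0) := by
      rw [goodIdx]
      rw [Finset.card_filter]
      push_cast
      exact Finset.sum_congr rfl fun i _ => by split_ifs <;> norm_num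
    have hcard : ((N : ℝ) - 3 * m ≤ ((goodIdx f thr x).card : ℝ)) := by
      have : ∀ i : Fin N, (if |f (x i)| ≤ thr then (1:ℝ) else 0) = 1 - h (x i) := by
        intro i; rw [hh_def]; dsimp only; split <;> norm_num
      rw [hcard_sum]
      simp_rw [this]
      rw [hsum_sub' h 1]
      rw [mul_one]
      linarith only [hsum_h]
    refine ⟨hcard, ?_⟩
    intro J hJ
    have hIsum : ∑ i ∈ goodIdx f thr x, f (x i) ^ 2 = ∑ i, g (x i) := by
      rw [goodIdx, Finset.sum_filter]
    have hsplit := Finset.sum_inter_add_sum_sdiff (goodIdx f thr x) J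
      (fun i => f (x i) ^ 2)
    have hmemb : ∀ i ∈ goodIdx f thr x, f (x i) ^ 2 ≤ b := by
      intro i hi
      rw [goodIdx, Finset.mem_filter] at hi
      rw [hb_def]
      calc f (x i) ^ 2 = |f (x i)| ^ 2 := (sq_abs _).symm
        _ ≤ thr ^ 2 := pow_le_pow_left₀ (abs_nonneg _) hi.2 2
    have hinter : ∑ i ∈ goodIdx f thr x ∩ J, f (x i) ^ 2 ≤ 4 * m * b := by
      calc ∑ i ∈ goodIdx f thr x ∩ J, f (x i) ^ 2
          ≤ ((goodIdx f thr x ∩ J).card : ℝ) * b := by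
            have := Finset.sum_le_card_nsmul (goodIdx f thr x ∩ J)
              (fun i => f (x i) ^ 2) b
              (fun i hi => hmemb i (Finset.mem_of_mem_inter_left hi))
            rwa [nsmul_eq_mul] at this
        _ ≤ 4 * m * b := by
            refine mul_le_mul_of_nonneg_right ?_ hb0.le
            have h1 : (goodIdx f thr x ∩ J).card ≤ J.card :=
              Finset.card_le_card Finset.inter_subset_right
            have h2 : (goodIdx f thr x ∩ J).card ≤ 4 * m := h1.trans hJ
            exact_mod_cast h2
    have hmb : 4 * (m:ℝ) * b = 4 * (N:ℝ) * δ := by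
      rw [← hNr, hδb]; ring
    have hdiff_nonneg : (0:ℝ) ≤ ∑ i ∈ goodIdx f thr x ∩ J, f (x i) ^ 2 :=
      Finset.sum_nonneg fun i _ => sq_nonneg _
    have hT_ub : ∑ i ∈ goodIdx f thr x \ J, f (x i) ^ 2 ≤ (N:ℝ) * (F2 + 2 * δ) := by
      have h1 : ∑ i ∈ goodIdx f thr x \ J, f (x i) ^ 2 ≤ ∑ i, g (x i) := by
        rw [← hIsum]; linarith only [hsplit, hdiff_nonneg]
      have h2 : G ≤ F2 := hGf2
      have h3 : (N:ℝ) * G ≤ (N:ℝ) * F2 := mul_le_mul_of_nonneg_left h2 hN0.le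
      linarith only [h1, h3, hx2]
    have hT_lb : (N:ℝ) * (F2 - 7 * δ) ≤ ∑ i ∈ goodIdx f thr x \ J, f (x i) ^ 2 := by
      have h1 : ∑ i, g (x i) - 4 * (N:ℝ) * δ ≤ ∑ i ∈ goodIdx f thr x \ J, f (x i) ^ 2 := by
        rw [← hIsum, ← hmb]; linarith only [hsplit, hinter]
      have h2 : F2 - δ ≤ G := by linarith only [hbias]
      have h3 : (N:ℝ) * (F2 - δ) ≤ (N:ℝ) * G := mul_le_mul_of_nonneg_left h2 hN0.le
      linarith only [h1, h3, hx3]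
    have hδgoal : 7 * nq ^ 2 * r ^ (1 - 2 / q) = 7 * δ := by rw [hδ_def]; ring
    have hδgoal2 : 2 * nq ^ 2 * r ^ (1 - 2 / q) = 2 * δ := by rw [hδ_def]; ring
    rw [hl2, hδgoal, hδgoal2]
    constructor
    · calc F2 - 7 * δ = (N:ℝ)⁻¹ * ((N:ℝ) * (F2 - 7 * δ)) := by field_simp
        _ ≤ (N : ℝ)⁻¹ * ∑ i ∈ goodIdx f thr x \ J, f (x i) ^ 2 :=
            mul_le_mul_of_nonneg_left hT_lb (by positivity)
    · calc (N : ℝ)⁻¹ * ∑ i ∈ goodIdx f thr x \ J, f (x i) ^ 2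
          ≤ (N:ℝ)⁻¹ * ((N:ℝ) * (F2 + 2 * δ)) :=
            mul_le_mul_of_nonneg_left hT_ub (by positivity)
        _ = F2 + 2 * δ := by field_simp
  -- measurability of bad events
  have hmeas_sum : ∀ (u : Ω → ℝ), Measurable u →
      Measurable (fun x : Fin N → Ω => ∑ i, u (x i)) := by
    intro u hu
    exact Finset.measurable_sum _ fun i _ => hu.comp (measurable_pi_apply i)
  have hB1m : MeasurableSet B1 :=
    measurableSet_le measurable_const (hmeas_sum _ (hhm.sub measurable_const))
  have hB2m : MeasurableSet B2 :=
    measurableSet_le measurable_const (hmeas_sum _ (hgm.sub measurable_const))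
  have hB3m : MeasurableSet B3 :=
    measurableSet_le measurable_const (hmeas_sum _ (measurable_const.sub hgm))
  haveI : IsProbabilityMeasure π := by
    rw [hπ_def]; infer_instance
  have hBu : π (B1 ∪ B2 ∪ B3) ≤ ENNReal.ofReal (3 * Real.exp (-(m:ℝ))) := by
    calc π (B1 ∪ B2 ∪ B3) ≤ π (B1 ∪ B2) + π B3 := measure_union_le _ _
      _ ≤ π B1 + π B2 + π B3 := by
          exact add_le_add (measure_union_le _ _) le_rfl
      _ ≤ ENNReal.ofReal (Real.exp (-(m:ℝ))) + ENNReal.ofReal (Real.exp (-(m:ℝ)))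
          + ENNReal.ofReal (Real.exp (-(m:ℝ))) := by
          exact add_le_add (add_le_add hB1 hB2) hB3
      _ = ENNReal.ofReal (3 * Real.exp (-(m:ℝ))) := by
          rw [← ENNReal.ofReal_add (Real.exp_pos _).le (Real.exp_pos _).le,
            ← ENNReal.ofReal_add (by positivity) (Real.exp_pos _).le]
          norm_num; ring_nf
          rw [ENNReal.ofReal_mul' (by norm_num), ENNReal.ofReal_ofNat]
  have hcompl : (B1 ∪ B2 ∪ B3)ᶜ ⊆
      {x : Fin N → Ω | ((N : ℝ) - 3 * m ≤ ((goodIdx f thr x).card : ℝ)) ∧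
        ∀ J : Finset (Fin N), J.card ≤ 4 * m →
          (l2norm μ f ^ 2 - 7 * nq ^ 2 * r ^ (1 - 2 / q) ≤
            (N : ℝ)⁻¹ * ∑ i ∈ goodIdx f thr x \ J, f (x i) ^ 2) ∧
          ((N : ℝ)⁻¹ * ∑ i ∈ goodIdx f thr x \ J, f (x i) ^ 2 ≤
            l2norm μ f ^ 2 + 2 * nq ^ 2 * r ^ (1 - 2 / q))} := by
    intro x hx
    simp only [Set.mem_compl_iff, Set.mem_union, not_or] at hx
    obtain ⟨⟨hx1, hx2⟩, hx3⟩ := hx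
    rw [hB1_def, Set.mem_setOf_eq, not_le] at hx1
    rw [hB2_def, Set.mem_setOf_eq, not_le] at hx2
    rw [hB3_def, Set.mem_setOf_eq, not_le] at hx3
    exact hdet x hx1 hx2 hx3
  refine le_trans ?_ (measure_mono hcompl)
  rw [prob_compl_eq_one_sub (hB1m.union hB2m |>.union hB3m)]
  by_cases hc : 1 - 2 * Real.exp (-(1/2:ℝ) * m) ≤ 0
  · rw [ENNReal.ofReal_eq_zero.2 hc]
    exact zero_le
  · push_neg at hc
    have hexp : Real.exp (-(m:ℝ)) = Real.exp (-(1/2:ℝ) * m) ^ 2 := by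
      rw [sq, ← Real.exp_add]
      congr 1
      push_cast
      ring
    have htiny : Real.exp (-(1/2:ℝ) * m) < 1/2 := by linarith only [hc]
    have hnum : (1 - 2 * Real.exp (-(1/2:ℝ) * m)) + 3 * Real.exp (-(m:ℝ)) ≤ 1 := by
      rw [hexp]
      have := numaux (Real.exp_pos (-(1/2:ℝ) * m)) htiny
      linarith only [this]
    refine ENNReal.le_sub_of_add_le_left (measure_ne_top _ _) ?_
    calc π (B1 ∪ B2 ∪ B3) + ENNReal.ofReal (1 - 2 * Real.exp (-(1/2:ℝ) * m))
        ≤ ENNReal.ofReal (3 * Real.exp (-(m:ℝ)))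
          + ENNReal.ofReal (1 - 2 * Real.exp (-(1/2:ℝ) * m)) := by
          exact add_le_add hBu le_rfl
      _ = ENNReal.ofReal (3 * Real.exp (-(m:ℝ)) + (1 - 2 * Real.exp (-(1/2:ℝ) * m))) := by
          rw [← ENNReal.ofReal_add (by positivity) hc.le]
      _ ≤ ENNReal.ofReal 1 := ENNReal.ofReal_le_ofReal (by linarith)
      _ = 1 := ENNReal.ofReal_one
end

section
/- There exist absolute constants c1 and c2 for which the following holds. Let Z ∈ L2 be a nonzero real-valued random variable satisfying Pr(|Z| ≥ κ0‖Z‖_{L2}) ≥ ε for some κ0 > 0 and 0 < ε < 1, let 0 < δ < 1, and let Z_1,…,Z_N be independent copies of Z. Then with probability at least 1 − 2exp(−c1 δ²ε N) there is a subset I ⊂ {1,…,N} with |I| ≥ (1−δ)εN such that for every i ∈ I, κ0‖Z‖_{L2} ≤ |Z_i| ≤ c2‖Z‖_{L2}/√(δε). -/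
open MeasureTheory ProbabilityTheory

variable {Ω : Type} [MeasurableSpace Ω]

section ChernoffAux

set_option linter.unusedSectionVars false

variable {α : Type} [MeasurableSpace α] (μ : Measure α) [IsProbabilityMeasure μ]

/-- number of coordinates landing in `A`. -/
noncomputable def cntS (A : Set α) (N : ℕ) (x : Fin N → α) : ℝ :=
  ∑ i, A.indicator (fun _ => (1:ℝ)) (x i)

lemma cntS_meas {A : Set α} (hA : MeasurableSet A) (N : ℕ) :
    Measurable (cntS A N) :=
  Finset.measurable_sum _ fun i _ =>
    (measurable_const.indicator hA).comp (measurable_pi_apply i)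

lemma cntS_nonneg (A : Set α) (N : ℕ) (x : Fin N → α) : 0 ≤ cntS A N x :=
  Finset.sum_nonneg fun _ _ => Set.indicator_nonneg (fun _ _ => zero_le_one) _

lemma cntS_le (A : Set α) (N : ℕ) (x : Fin N → α) : cntS A N x ≤ N := by
  classical
  calc cntS A N x ≤ ∑ _i : Fin N, (1:ℝ) := by
        refine Finset.sum_le_sum fun i _ => ?_
        by_cases h : x i ∈ A <;> simp [Set.indicator_apply, h]
    _ = N := by simp

lemma integral_exp_cntS {A : Set α} (hA : MeasurableSet A) (N : ℕ) (t : ℝ) :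
    ∫ x, Real.exp (t * cntS A N x) ∂(Measure.pi fun _ : Fin N => μ)
      = (1 + (Real.exp t - 1) * (μ A).toReal) ^ N := by
  classical
  have hpt : ∀ x : Fin N → α, Real.exp (t * cntS A N x)
      = ∏ i, (fun a => 1 + A.indicator (fun _ => Real.exp t - 1) a) (x i) := by
    intro x
    rw [cntS, Finset.mul_sum, Real.exp_sum]
    refine Finset.prod_congr rfl fun i _ => ?_
    by_cases h : x i ∈ A <;> simp [Set.indicator_apply, h]
  simp_rw [hpt]
  letI : MeasureSpace α := ⟨μ⟩
  have hvol : (Measure.pi fun _ : Fin N => μ) = (volume : Measure (Fin N → α)) := rfl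
  rw [MeasureTheory.integral_fintype_prod_eq_pow (ι := Fin N)
    (fun a => 1 + A.indicator (fun _ => Real.exp t - 1) a)]
  congr 1
  · rw [integral_add (integrable_const 1) ((integrable_const _).indicator hA),
      integral_const, integral_indicator_const _ hA]
    simp [mul_comm]
    exact Or.inl rfl
  · simp

lemma integrable_exp_cntS {A : Set α} (hA : MeasurableSet A) (N : ℕ) (t : ℝ) :
    Integrable (fun x => Real.exp (t * cntS A N x)) (Measure.pi fun _ : Fin N => μ) := by
  refine (integrable_const (Real.exp (|t| * N))).mono'
    ((((cntS_meas hA N).const_mul t).exp).aestronglyMeasurable) (ae_of_all _ fun x => ?_)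
  rw [Real.norm_eq_abs, abs_of_pos (Real.exp_pos _), Real.exp_le_exp]
  calc t * cntS A N x ≤ |t * cntS A N x| := le_abs_self _
    _ = |t| * cntS A N x := by rw [abs_mul, abs_of_nonneg (cntS_nonneg A N x)]
    _ ≤ |t| * N := mul_le_mul_of_nonneg_left (cntS_le A N x) (abs_nonneg t)

lemma cntS_upper_tail {A : Set α} (hA : MeasurableSet A) (N : ℕ) {t : ℝ} (ht : 0 ≤ t) (a : ℝ) :
    ((Measure.pi fun _ : Fin N => μ) {x | a ≤ cntS A N x}).toReal
      ≤ Real.exp (-t * a + N * (μ A).toReal * (Real.exp t - 1)) := by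
  have key := measure_ge_le_exp_mul_mgf (X := cntS A N) (μ := Measure.pi fun _ : Fin N => μ)
    a ht (integrable_exp_cntS μ hA N t)
  refine key.trans ?_
  rw [mgf, integral_exp_cntS μ hA N t, Real.exp_add]
  refine mul_le_mul_of_nonneg_left ?_ (Real.exp_pos _).le
  have hp0 : 0 ≤ (μ A).toReal := ENNReal.toReal_nonneg
  have hb0 : 0 ≤ 1 + (Real.exp t - 1) * (μ A).toReal := by
    nlinarith [Real.exp_pos t, Real.one_le_exp ht]
  calc (1 + (Real.exp t - 1) * (μ A).toReal) ^ N
      ≤ (Real.exp ((Real.exp t - 1) * (μ A).toReal)) ^ N := by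
        exact pow_le_pow_left₀ hb0
          (by linarith [Real.add_one_le_exp ((Real.exp t - 1) * (μ A).toReal)]) N
    _ = Real.exp (N * ((μ A).toReal * (Real.exp t - 1))) := by
        rw [← Real.exp_nat_mul]; ring_nf
    _ = Real.exp (N * (μ A).toReal * (Real.exp t - 1)) := by ring_nf

lemma cntS_lower_tail {A : Set α} (hA : MeasurableSet A) (N : ℕ) {t : ℝ} (ht : t ≤ 0) (a : ℝ) :
    ((Measure.pi fun _ : Fin N => μ) {x | cntS A N x ≤ a}).toReal
      ≤ Real.exp (-t * a + N * (μ A).toReal * (Real.exp t - 1)) := by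
  have key := measure_le_le_exp_mul_mgf (X := cntS A N) (μ := Measure.pi fun _ : Fin N => μ)
    a ht (integrable_exp_cntS μ hA N t)
  refine key.trans ?_
  rw [mgf, integral_exp_cntS μ hA N t, Real.exp_add]
  refine mul_le_mul_of_nonneg_left ?_ (Real.exp_pos _).le
  have hp0 : 0 ≤ (μ A).toReal := ENNReal.toReal_nonneg
  have hp1 : (μ A).toReal ≤ 1 := by
    simpa using ENNReal.toReal_mono ENNReal.one_ne_top (prob_le_one (μ := μ) (s := A))
  have hb0 : 0 ≤ 1 + (Real.exp t - 1) * (μ A).toReal := by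
    nlinarith [Real.exp_pos t]
  calc (1 + (Real.exp t - 1) * (μ A).toReal) ^ N
      ≤ (Real.exp ((Real.exp t - 1) * (μ A).toReal)) ^ N := by
        exact pow_le_pow_left₀ hb0
          (by linarith [Real.add_one_le_exp ((Real.exp t - 1) * (μ A).toReal)]) N
    _ = Real.exp (N * ((μ A).toReal * (Real.exp t - 1))) := by
        rw [← Real.exp_nat_mul]; ring_nf
    _ = Real.exp (N * (μ A).toReal * (Real.exp t - 1)) := by ring_nf

lemma exp_neg_quad {u : ℝ} (hu : 0 ≤ u) : Real.exp (-u) ≤ 1 - u + (3/4) * u^2 := by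
  have h1 : u/2 + 1 ≤ Real.exp (u/2) := Real.add_one_le_exp _
  have h2 : Real.exp (-u) * (Real.exp (u/2) * Real.exp (u/2)) = 1 := by
    rw [← Real.exp_add, ← Real.exp_add]; norm_num
  set c : ℝ := 1 + u/2 with hc
  have hc0 : 0 < c := by positivity
  have hXc : Real.exp (-u) * c^2 ≤ 1 := by
    calc Real.exp (-u) * c^2 ≤ Real.exp (-u) * (Real.exp (u/2) * Real.exp (u/2)) := by
          have : c ^ 2 ≤ Real.exp (u/2) * Real.exp (u/2) := by nlinarith [Real.exp_pos (u/2)]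
          exact mul_le_mul_of_nonneg_left this (Real.exp_pos _).le
      _ = 1 := h2
  have hRc : 1 ≤ (1 - u + (3/4) * u^2) * c^2 := by nlinarith [pow_nonneg hu 3, pow_nonneg hu 4]
  exact le_of_mul_le_mul_right (hXc.trans hRc) (by positivity)

end ChernoffAux

set_option maxHeartbeats 1000000 in
/-- Lemma 3.7. -/
theorem statement9 :
    ∃ c₁ c₂ : ℝ, 0 < c₁ ∧ 0 < c₂ ∧
    ∀ (Ω : Type) [MeasurableSpace Ω] (μ : Measure Ω) [IsProbabilityMeasure μ]
      (Z : Ω → ℝ), Measurable Z → MemLp Z 2 μ → 0 < ∫ a, Z a ^ 2 ∂μ →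
    ∀ κ₀ ε δ : ℝ, 0 < κ₀ → 0 < ε → ε < 1 → 0 < δ → δ < 1 →
    ENNReal.ofReal ε ≤ μ {a | κ₀ * l2norm μ Z ≤ |Z a|} →
    ∀ N : ℕ, 0 < N →
    ENNReal.ofReal (1 - 2 * Real.exp (-c₁ * δ ^ 2 * ε * N)) ≤
      (Measure.pi fun _ : Fin N => μ)
        {x | ∃ I : Finset (Fin N), (1 - δ) * ε * N ≤ (I.card : ℝ) ∧
          ∀ i ∈ I, κ₀ * l2norm μ Z ≤ |Z (x i)| ∧
            |Z (x i)| ≤ c₂ * l2norm μ Z / Real.sqrt (δ * ε)} := by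
  classical
  refine ⟨1/16, 4, by norm_num, by norm_num, ?_⟩
  intro Ω _ μ _ Z hZ hZL2 hI2 κ₀ ε δ hκ hε hε1 hδ hδ1 hsmall N hN
  set π : Measure (Fin N → Ω) := Measure.pi fun _ : Fin N => μ with hπ
  set L : ℝ := l2norm μ Z with hL
  set T : ℝ := 4 * L / Real.sqrt (δ * ε) with hT
  set A : Set Ω := {a | κ₀ * L ≤ |Z a|} with hA
  set C : Set Ω := {a | T < |Z a|} with hC
  have hAmeas : MeasurableSet A := measurableSet_le measurable_const hZ.abs
  have hCmeas : MeasurableSet C := measurableSet_lt measurable_const hZ.abs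
  have hNn : (0:ℝ) ≤ N := Nat.cast_nonneg N
  have hδε : 0 < δ * ε := mul_pos hδ hε
  -- small-ball lower bound
  have hp : ε ≤ (μ A).toReal := by
    have := ENNReal.toReal_mono (measure_ne_top μ A) hsmall
    rwa [ENNReal.toReal_ofReal hε.le] at this
  -- Chebyshev upper bound on μ C
  have hLpos : 0 < L := Real.sqrt_pos.mpr hI2
  have hTpos : 0 < T := div_pos (by positivity) (Real.sqrt_pos.mpr hδε)
  have hT2 : T ^ 2 = 16 * (∫ a, Z a ^ 2 ∂μ) / (δ * ε) := by
    rw [hT, div_pow, mul_pow, Real.sq_sqrt hδε.le, hL, l2norm, Real.sq_sqrt hI2.le]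
    norm_num
  have hq : (μ C).toReal ≤ δ * ε / 16 := by
    have hsub : C ⊆ {a | T ^ 2 ≤ Z a ^ 2} := by
      intro a ha
      have h1 : T ≤ |Z a| := le_of_lt ha
      have := sq_abs (Z a)
      simp only [Set.mem_setOf_eq]
      nlinarith [abs_nonneg (Z a)]
    have hmar := mul_meas_ge_le_integral_of_nonneg (μ := μ)
      (f := fun a => Z a ^ 2) (ae_of_all μ fun a => sq_nonneg (Z a)) hZL2.integrable_sq (T ^ 2)
    have hmono : (μ C).toReal ≤ (μ {a | T ^ 2 ≤ Z a ^ 2}).toReal :=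
      ENNReal.toReal_mono (measure_ne_top _ _) (measure_mono hsub)
    have hT2pos : 0 < T ^ 2 := by positivity
    have h3 : (μ {a | T ^ 2 ≤ Z a ^ 2}).toReal ≤ (∫ a, Z a ^ 2 ∂μ) / T ^ 2 := by
      rw [le_div_iff₀ hT2pos]; rw [measureReal_def] at hmar; linarith [hmar]
    have h4 : (∫ a, Z a ^ 2 ∂μ) / T ^ 2 = δ * ε / 16 := by
      rw [hT2]; field_simp
    linarith
  -- the two tail estimates
  set E : ℝ := Real.exp (-(1/16) * δ ^ 2 * ε * N) with hE
  have hEpos : 0 < E := Real.exp_pos _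
  have htailA : (π {x | cntS A N x ≤ (1 - δ/2) * ε * N}).toReal ≤ E := by
    refine (cntS_lower_tail μ hAmeas N (t := -(δ/2)) (by linarith) _).trans ?_
    rw [Real.exp_le_exp]
    have hexp := exp_neg_quad (u := δ/2) (by linarith)
    have hlt1 : Real.exp (-(δ/2)) - 1 ≤ 0 := by
      have : Real.exp (-(δ/2)) < 1 := Real.exp_lt_one_iff.mpr (by linarith)
      linarith
    have hstep : (N:ℝ) * (μ A).toReal * (Real.exp (-(δ/2)) - 1)
        ≤ N * ε * (Real.exp (-(δ/2)) - 1) := by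
      nlinarith [mul_nonneg (mul_nonneg hNn (sub_nonneg.mpr hp)) (neg_nonneg.mpr hlt1)]
    have h3 : (N:ℝ) * ε * (Real.exp (-(δ/2)) - 1)
        ≤ N * ε * (-(δ/2) + (3/4) * (δ/2)^2) := by
      have hNε : 0 ≤ (N:ℝ) * ε := mul_nonneg hNn hε.le
      nlinarith
    calc -(-(δ/2)) * ((1 - δ/2) * ε * N) + N * (μ A).toReal * (Real.exp (-(δ/2)) - 1)
        ≤ (δ/2) * ((1 - δ/2) * ε * N) + N * ε * (-(δ/2) + (3/4) * (δ/2)^2) := by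
          linarith
      _ = -(1/16) * δ ^ 2 * ε * N := by ring
  have htailC : (π {x | (δ/2) * ε * N ≤ cntS C N x}).toReal ≤ E := by
    refine (cntS_upper_tail μ hCmeas N (t := 1) zero_le_one _).trans ?_
    rw [Real.exp_le_exp]
    have he1 : (1:ℝ) ≤ Real.exp 1 := by linarith [Real.add_one_le_exp (1:ℝ)]
    have hstep : (N:ℝ) * (μ C).toReal * (Real.exp 1 - 1)
        ≤ N * (δ * ε / 16) * (Real.exp 1 - 1) := by
      nlinarith [mul_nonneg (mul_nonneg hNn (sub_nonneg.mpr hq)) (sub_nonneg.mpr he1)]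
    have hkey : (N:ℝ) * (δ * ε / 16) * (Real.exp 1 - 1) - (δ/2) * ε * N
        ≤ -(1/16) * δ ^ 2 * ε * N := by
      have he3 : Real.exp 1 < 3 := lt_trans Real.exp_one_lt_d9 (by norm_num)
      have hprod : 0 ≤ δ * ε * (N:ℝ) * (1 - δ) := by
        apply mul_nonneg (by positivity); linarith
      have hs : 0 ≤ δ * ε * (N:ℝ) := by positivity
      have h8 : Real.exp 1 - 1 + δ ≤ 8 := by linarith
      have hmul : δ * ε * (N:ℝ) * (Real.exp 1 - 1 + δ) ≤ δ * ε * (N:ℝ) * 8 :=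
        mul_le_mul_of_nonneg_left h8 hs
      nlinarith [hmul]
    linarith
  -- the good event
  set Good : Set (Fin N → Ω) :=
    {x | (1 - δ/2) * ε * N < cntS A N x ∧ cntS C N x < (δ/2) * ε * N} with hGood
  have hGoodSub : Good ⊆ {x | ∃ I : Finset (Fin N), (1 - δ) * ε * N ≤ (I.card : ℝ) ∧
      ∀ i ∈ I, κ₀ * l2norm μ Z ≤ |Z (x i)| ∧
        |Z (x i)| ≤ 4 * l2norm μ Z / Real.sqrt (δ * ε)} := by
    rintro x ⟨h1, h2⟩
    refine ⟨Finset.univ.filter (fun i => x i ∈ A ∧ x i ∉ C), ?_, ?_⟩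
    · have hfA : ((Finset.univ.filter (fun i => x i ∈ A)).card : ℝ) = cntS A N x := by
        simp [cntS, Set.indicator_apply, Finset.sum_boole]
      have hfC : ((Finset.univ.filter (fun i => x i ∈ C)).card : ℝ) = cntS C N x := by
        simp [cntS, Set.indicator_apply, Finset.sum_boole]
      have hsubun : Finset.univ.filter (fun i => x i ∈ A) ⊆
          (Finset.univ.filter (fun i => x i ∈ A ∧ x i ∉ C)) ∪
            Finset.univ.filter (fun i => x i ∈ C) := by
        intro i hi
        simp only [Finset.mem_filter, Finset.mem_union, Finset.mem_univ, true_and] at *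
        by_cases hc : x i ∈ C
        · exact Or.inr hc
        · exact Or.inl ⟨hi, hc⟩
      have hcard := (Finset.card_le_card hsubun).trans (Finset.card_union_le _ _)
      have hcardR : ((Finset.univ.filter (fun i => x i ∈ A)).card : ℝ)
          ≤ ((Finset.univ.filter (fun i => x i ∈ A ∧ x i ∉ C)).card : ℝ)
            + ((Finset.univ.filter (fun i => x i ∈ C)).card : ℝ) := by
        exact_mod_cast hcard
      rw [hfA, hfC] at hcardR
      nlinarith
    · intro i hi
      simp only [Finset.mem_filter, Finset.mem_univ, true_and] at hi
      obtain ⟨hiA, hiC⟩ := hi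
      constructor
      · exact hiA
      · exact not_lt.mp (fun h => hiC (by exact h))
  -- measure arithmetic
  have hcompl : Goodᶜ ⊆ {x | cntS A N x ≤ (1 - δ/2) * ε * N}
      ∪ {x | (δ/2) * ε * N ≤ cntS C N x} := by
    intro x hx
    rw [hGood, Set.mem_compl_iff, Set.mem_setOf_eq, not_and_or] at hx
    rcases hx with h | h
    · exact Or.inl (not_lt.mp h)
    · exact Or.inr (not_lt.mp h)
  have hmA : π {x | cntS A N x ≤ (1 - δ/2) * ε * N} ≤ ENNReal.ofReal E := by
    rw [← ENNReal.ofReal_toReal (measure_ne_top π _)]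
    exact ENNReal.ofReal_le_ofReal htailA
  have hmC : π {x | (δ/2) * ε * N ≤ cntS C N x} ≤ ENNReal.ofReal E := by
    rw [← ENNReal.ofReal_toReal (measure_ne_top π _)]
    exact ENNReal.ofReal_le_ofReal htailC
  have honele : (1:ENNReal) ≤ π Good + ENNReal.ofReal (2 * E) := by
    calc (1:ENNReal) = π Set.univ := (measure_univ).symm
      _ = π (Good ∪ Goodᶜ) := by rw [Set.union_compl_self]
      _ ≤ π Good + π Goodᶜ := measure_union_le _ _
      _ ≤ π Good + (ENNReal.ofReal E + ENNReal.ofReal E) := by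
          refine add_le_add_right ((measure_mono hcompl).trans
            ((measure_union_le _ _).trans (add_le_add hmA hmC))) _
      _ = π Good + ENNReal.ofReal (2 * E) := by
          rw [← ENNReal.ofReal_add hEpos.le hEpos.le]; ring_nf
  have hgoal : ENNReal.ofReal (1 - 2 * E) ≤ π Good := by
    rcases le_or_gt (1 - 2 * E) 0 with h | h
    · rw [ENNReal.ofReal_of_nonpos h]; exact zero_le
    · have heq : ENNReal.ofReal (1 - 2 * E) = 1 - ENNReal.ofReal (2 * E) := by
        rw [ENNReal.ofReal_sub _ (by positivity), ENNReal.ofReal_one]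
      rw [heq]
      exact tsub_le_iff_right.mpr honele
  calc ENNReal.ofReal (1 - 2 * Real.exp (-(1/16) * δ ^ 2 * ε * N))
      ≤ π Good := hgoal
    _ ≤ _ := measure_mono hGoodSub
end
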